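/- arXiv:1301.1632 — 3 statements merged into one kernel-verified Lean document; each statement's English description precedes it below -/
import Mathlib

section
/- Let A and B be unbounded self-adjoint operators on a complex Hilbert space H such that B is invertible, AB ⊂ BA, and AB is densely defined. Then BA is self-adjoint. -/
open LinearPMap InnerProductSpace

variable {H : Type*} [NormedAddCommGroup H] [InnerProductSpace ℂ H] [CompleteSpace H]

/-- The domain `{x ∈ D(A) : A x ∈ D(B)}` of the product `B ∘ A` of two unbounded
operators. -/
def LinearPMap.prodDomain (B A : H →ₗ.[ℂ] H) : Submodule ℂ H where
  carrier := {x | ∃ hx : x ∈ A.domain, A ⟨x, hx⟩ ∈ B.domain}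
  add_mem' := by
    rintro x y ⟨hx, hx'⟩ ⟨hy, hy'⟩
    refine ⟨add_mem hx hy, ?_⟩
    have h1 : (⟨x + y, add_mem hx hy⟩ : A.domain) = ⟨x, hx⟩ + ⟨y, hy⟩ := rfl
    rw [h1, A.map_add]
    exact add_mem hx' hy'
  zero_mem' := by
    refine ⟨zero_mem _, ?_⟩
    have h1 : (⟨0, zero_mem _⟩ : A.domain) = 0 := rfl
    rw [h1, A.map_zero]
    exact zero_mem _
  smul_mem' := by
    rintro c x ⟨hx, hx'⟩
    refine ⟨Submodule.smul_mem _ c hx, ?_⟩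
    have h1 : (⟨c • x, Submodule.smul_mem _ c hx⟩ : A.domain) = c • ⟨x, hx⟩ := rfl
    rw [h1, A.map_smul]
    exact Submodule.smul_mem _ c hx'

theorem LinearPMap.prodDomain_le (B A : H →ₗ.[ℂ] H) : B.prodDomain A ≤ A.domain :=
  fun _ hx => hx.1

/-- The product `B ∘ A` of two unbounded operators, given by `x ↦ B (A x)` on the
domain `{x ∈ D(A) : A x ∈ D(B)}`. -/
noncomputable def LinearPMap.prodOp (B A : H →ₗ.[ℂ] H) : H →ₗ.[ℂ] H where
  domain := B.prodDomain A
  toFun := B.toFun.comp <|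
    ((A.toFun.comp (Submodule.inclusion (B.prodDomain_le A))).codRestrict B.domain
      (fun x => x.2.choose_spec))

/-- An unbounded operator is densely defined if its domain is dense. -/
def LinearPMap.DenselyDefined (A : H →ₗ.[ℂ] H) : Prop :=
  Dense (A.domain : Set H)

/-- An unbounded operator is normal if it is closed and `A†A = AA†`. -/
noncomputable def LinearPMap.IsNormalOp (A : H →ₗ.[ℂ] H) : Prop :=
  A.IsClosed ∧ A.adjoint.prodOp A = A.prodOp A.adjoint

/-- An unbounded operator `B` is invertible if there is an everywhere-defined bounded
operator `B⁻¹` with `B⁻¹ B ⊂ B B⁻¹ = I`. -/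
def LinearPMap.IsInvertibleOp (B : H →ₗ.[ℂ] H) : Prop :=
  ∃ Binv : H →L[ℂ] H, (∀ x : B.domain, Binv (B x) = x) ∧
    ∀ y : H, ∃ hy : Binv y ∈ B.domain, B ⟨Binv y, hy⟩ = y

local notation "⟪" x ", " y "⟫" => @inner ℂ _ _ x y

private theorem coercive_surj {E : Type*} [NormedAddCommGroup E] [InnerProductSpace ℂ E]
    [CompleteSpace E] (T : E →L[ℂ] E) {ε : ℝ} (hε : 0 < ε)
    (hco : ∀ x, ε * ‖x‖ ^ 2 ≤ (⟪T x, x⟫).re) : Function.Surjective T := by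
  have hlow : ∀ x, ε * ‖x‖ ≤ ‖T x‖ := by
    intro x
    rcases eq_or_ne x 0 with rfl | hx
    · simp
    have h1 : ε * ‖x‖ ^ 2 ≤ ‖T x‖ * ‖x‖ := by
      refine (hco x).trans ?_
      refine (Complex.re_le_norm _).trans ?_
      exact norm_inner_le_norm _ _
    have hx0 : 0 < ‖x‖ := norm_pos_iff.mpr hx
    rw [pow_two, ← mul_assoc] at h1
    exact le_of_mul_le_mul_right h1 hx0
  have hanti : AntilipschitzWith (⟨ε⁻¹, by positivity⟩ : NNReal) T := by
    refine T.antilipschitz_of_bound fun x => ?_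
    change ‖x‖ ≤ ε⁻¹ * ‖T x‖
    rw [← div_eq_inv_mul, le_div_iff₀ hε, mul_comm]
    exact hlow x
  have hclosed : IsClosed (Set.range T) := hanti.isClosed_range T.uniformContinuous
  have hclosed' : IsClosed ((LinearMap.range (T : E →ₗ[ℂ] E) : Submodule ℂ E) : Set E) := by
    have : ((LinearMap.range (T : E →ₗ[ℂ] E) : Submodule ℂ E) : Set E) = Set.range T := by
      ext w; simp [LinearMap.mem_range]
    rwa [this]
  haveI : CompleteSpace (LinearMap.range (T : E →ₗ[ℂ] E)) := hclosed'.completeSpace_coe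
  have hbot : (LinearMap.range (T : E →ₗ[ℂ] E))ᗮ = ⊥ := by
    rw [Submodule.eq_bot_iff]
    intro z hz
    have h0 : ⟪T z, z⟫ = 0 := hz (T z) (LinearMap.mem_range_self _ z)
    have h2 := hco z
    rw [h0] at h2
    simp only [Complex.zero_re] at h2
    have h3 : ‖z‖ ^ 2 ≤ 0 := by nlinarith [sq_nonneg ‖z‖]
    have h4 : ‖z‖ = 0 := by nlinarith [norm_nonneg z]
    exact norm_eq_zero.mp h4
  have htop : LinearMap.range (T : E →ₗ[ℂ] E) = ⊤ := Submodule.orthogonal_eq_bot_iff.mp hbot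
  exact LinearMap.range_eq_top.mp htop

private theorem coercive_inj {E : Type*} [NormedAddCommGroup E] [InnerProductSpace ℂ E]
    (T : E →L[ℂ] E) {ε : ℝ} (hε : 0 < ε)
    (hco : ∀ x, ε * ‖x‖ ^ 2 ≤ (⟪T x, x⟫).re) : Function.Injective T := by
  intro a b hab
  have h := hco (a - b)
  rw [_root_.map_sub, sub_eq_zero.mpr hab] at h
  simp only [inner_zero_left, Complex.zero_re] at h
  rw [← mul_zero ε] at h
  have h2 : ‖a - b‖ ^ 2 ≤ 0 := le_of_mul_le_mul_left h hε
  have h3 : ‖a - b‖ ^ 2 = 0 := le_antisymm h2 (sq_nonneg _)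
  rw [pow_eq_zero_iff (two_ne_zero), norm_eq_zero, sub_eq_zero] at h3
  exact h3

private theorem adjoint_graph_closed (T : H →ₗ.[ℂ] H) (hT : Dense (T.domain : Set H)) :
    IsClosed ((T†).graph : Set (H × H)) := by
  have hset : ((T†).graph : Set (H × H)) =
      ⋂ x : T.domain, {p : H × H | ⟪p.2, (x : H)⟫ = ⟪p.1, T x⟫} := by
    ext p
    simp only [Set.mem_iInter, Set.mem_setOf_eq, SetLike.mem_coe, LinearPMap.mem_graph_iff]
    constructor
    · rintro ⟨y, hy1, hy2⟩ x
      rw [← hy2, ← hy1]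
      exact T.adjoint_isFormalAdjoint hT y x
    · intro h
      have hmem : p.1 ∈ (T†).domain :=
        T.mem_adjoint_domain_of_exists p.1 ⟨p.2, fun x => h x⟩
      refine ⟨⟨p.1, hmem⟩, rfl, ?_⟩
      exact LinearPMap.adjoint_apply_eq hT _ fun x => h x
  rw [hset]
  exact isClosed_iInter fun x => isClosed_eq
    (Continuous.inner continuous_snd continuous_const)
    (Continuous.inner continuous_fst continuous_const)

private theorem graph_surj (A : H →ₗ.[ℂ] H) (hAcl : IsClosed (A.graph : Set (H × H)))
    (S : H →L[ℂ] H) (hS : ∀ p ∈ A.graph, (S p.1, S p.2) ∈ A.graph)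
    {ε : ℝ} (hε : 0 < ε) (hco : ∀ x, ε * ‖x‖ ^ 2 ≤ (⟪S x, x⟫).re) :
    ∀ p ∈ A.graph, ∃ q ∈ A.graph, S q.1 = p.1 ∧ S q.2 = p.2 := by
  classical
  set e : WithLp 2 (H × H) ≃L[ℂ] H × H := WithLp.prodContinuousLinearEquiv 2 ℂ H H with he
  set G : Submodule ℂ (WithLp 2 (H × H)) :=
    A.graph.comap ((e : WithLp 2 (H × H) ≃ₗ[ℂ] H × H) : WithLp 2 (H × H) →ₗ[ℂ] H × H) with hG
  have hGmem : ∀ w : WithLp 2 (H × H), w ∈ G ↔ e w ∈ A.graph := fun w => Iff.rfl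
  have hGclosed : IsClosed (G : Set (WithLp 2 (H × H))) := by
    have : (G : Set (WithLp 2 (H × H))) = ⇑e ⁻¹' (A.graph : Set (H × H)) := rfl
    rw [this]
    exact hAcl.preimage e.continuous
  haveI : CompleteSpace G := hGclosed.completeSpace_coe
  set f : WithLp 2 (H × H) →L[ℂ] WithLp 2 (H × H) :=
    (e.symm : H × H →L[ℂ] WithLp 2 (H × H)).comp ((S.prodMap S).comp
      (e : WithLp 2 (H × H) →L[ℂ] H × H)) with hf
  have hfapply : ∀ w, f w = e.symm (S (e w).1, S (e w).2) := fun w => rfl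
  have hGinv : ∀ w ∈ G, f w ∈ G := by
    intro w hw
    rw [hGmem, hfapply, e.apply_symm_apply]
    exact hS _ hw
  set Φ : G →L[ℂ] G :=
    { toLinearMap := (f.toLinearMap).restrict hGinv
      cont := Continuous.subtype_mk (f.continuous.comp continuous_subtype_val) _ } with hΦ
  have hΦapply : ∀ g : G, (Φ g : WithLp 2 (H × H)) = f (g : WithLp 2 (H × H)) := fun g => rfl
  have hco' : ∀ g : G, ε * ‖g‖ ^ 2 ≤ (⟪Φ g, g⟫).re := by
    intro g
    rw [Submodule.coe_inner, hΦapply, hfapply]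
    rw [WithLp.prod_inner_apply]
    have h1 : (e.symm (S (e ↑g).1, S (e ↑g).2)).ofLp.1 = S ((g : WithLp 2 (H × H)).ofLp.1) := rfl
    have h2 : (e.symm (S (e ↑g).1, S (e ↑g).2)).ofLp.2 = S ((g : WithLp 2 (H × H)).ofLp.2) := rfl
    rw [h1, h2, Complex.add_re]
    have hnorm : ‖g‖ ^ 2 = ‖(g : WithLp 2 (H × H)).fst‖ ^ 2 + ‖(g : WithLp 2 (H × H)).snd‖ ^ 2 := by
      rw [Submodule.coe_norm, WithLp.prod_norm_sq_eq_of_L2]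
    rw [hnorm, mul_add]
    exact add_le_add (hco _) (hco _)
  intro p hp
  have hpmem : e.symm p ∈ G := by rw [hGmem, e.apply_symm_apply]; exact hp
  obtain ⟨q, hq⟩ := coercive_surj Φ hε hco' ⟨e.symm p, hpmem⟩
  have hq' : f (q : WithLp 2 (H × H)) = e.symm p := by
    rw [← hΦapply, hq]
  refine ⟨e (q : WithLp 2 (H × H)), q.2, ?_, ?_⟩
  · have := congrArg (fun w => (e w).1) hq'
    simpa [hfapply] using this
  · have := congrArg (fun w => (e w).2) hq'
    simpa [hfapply] using this

set_option maxHeartbeats 1000000 in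
/-- If `A` and `B` are unbounded self-adjoint operators with `B` invertible,
`AB ⊂ BA` and `AB` densely defined, then `BA` is self-adjoint. -/
theorem BA_selfAdjoint (A B : H →ₗ.[ℂ] H)
    (hA : IsSelfAdjoint A) (hB : IsSelfAdjoint B)
    (hBinv : B.IsInvertibleOp)
    (hABBA : A.prodOp B ≤ B.prodOp A)
    (hABdense : (A.prodOp B).DenselyDefined) :
    IsSelfAdjoint (B.prodOp A) := by
  obtain ⟨C, hC1, hC2⟩ := hBinv
  have hAeq : A† = A := hA
  have hBeq : B† = B := hB
  have hAdense : Dense (A.domain : Set H) := hA.dense_domain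
  have hBdense : Dense (B.domain : Set H) := hB.dense_domain
  set T : H →ₗ.[ℂ] H := B.prodOp A with hTdef
  -- application lemmas
  have hBAapply : ∀ (x : H) (hm : x ∈ T.domain) (h : x ∈ A.domain) (h' : A ⟨x, h⟩ ∈ B.domain),
      T ⟨x, hm⟩ = B ⟨A ⟨x, h⟩, h'⟩ := fun _ _ _ _ => rfl
  have hABapply : ∀ (x : H) (hm : x ∈ (A.prodOp B).domain) (h : x ∈ B.domain)
      (h' : B ⟨x, h⟩ ∈ A.domain), (A.prodOp B) ⟨x, hm⟩ = A ⟨B ⟨x, h⟩, h'⟩ := fun _ _ _ _ => rfl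
  -- symmetric forms
  have hAsym : ∀ (u v : A.domain), ⟪A u, (v : H)⟫ = ⟪(u : H), A v⟫ := by
    have h := A.adjoint_isFormalAdjoint hAdense
    rw [hAeq] at h
    exact fun u v => h u v
  have hBsym : ∀ (u v : B.domain), ⟪B u, (v : H)⟫ = ⟪(u : H), B v⟫ := by
    have h := B.adjoint_isFormalAdjoint hBdense
    rw [hBeq] at h
    exact fun u v => h u v
  -- C facts
  have hCmem : ∀ z : H, C z ∈ B.domain := fun z => (hC2 z).choose
  have hBC : ∀ z : H, B ⟨C z, hCmem z⟩ = z := fun z => (hC2 z).choose_spec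
  have hCsa : ∀ z w : H, ⟪C z, w⟫ = ⟪z, C w⟫ := by
    intro z w
    calc ⟪C z, w⟫ = ⟪C z, B ⟨C w, hCmem w⟩⟫ := by rw [hBC]
      _ = ⟪B ⟨C z, hCmem z⟩, C w⟫ := (hBsym ⟨C z, hCmem z⟩ ⟨C w, hCmem w⟩).symm
      _ = ⟪z, C w⟫ := by rw [hBC]
  -- Lemma L package
  have hkey1 : ∀ (z : H) (hz : z ∈ A.domain), ∃ hm : C z ∈ T.domain,
      T ⟨C z, hm⟩ = A ⟨z, hz⟩ ∧ ∃ h1 : C z ∈ A.domain, A ⟨C z, h1⟩ = C (A ⟨z, hz⟩) := by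
    intro z hz
    have hBCz : B ⟨C z, hCmem z⟩ ∈ A.domain := by rw [hBC]; exact hz
    have hmemAB : C z ∈ (A.prodOp B).domain := ⟨hCmem z, hBCz⟩
    have hmemBA : C z ∈ T.domain := hABBA.1 hmemAB
    obtain ⟨h1, h2⟩ := hmemBA
    have hval : (A.prodOp B) ⟨C z, hmemAB⟩ = T ⟨C z, hABBA.1 hmemAB⟩ := hABBA.2 rfl
    have hval1 : (A.prodOp B) ⟨C z, hmemAB⟩ = A ⟨z, hz⟩ := by
      rw [hABapply _ _ (hCmem z) hBCz]
      exact congrArg _ (Subtype.ext (hBC z))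
    have hTval : T ⟨C z, hABBA.1 hmemAB⟩ = A ⟨z, hz⟩ := by rw [← hval, hval1]
    refine ⟨hABBA.1 hmemAB, hTval, h1, ?_⟩
    have h3 : T ⟨C z, hABBA.1 hmemAB⟩ = B ⟨A ⟨C z, h1⟩, h2⟩ := hBAapply _ _ h1 h2
    have h4 : B ⟨A ⟨C z, h1⟩, h2⟩ = A ⟨z, hz⟩ := by rw [← h3, hTval]
    have h5 := congrArg C h4
    rw [hC1 ⟨A ⟨C z, h1⟩, h2⟩] at h5
    exact h5
  have hCA : ∀ (z : H) (hz : z ∈ A.domain), ∃ h1 : C z ∈ A.domain,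
      A ⟨C z, h1⟩ = C (A ⟨z, hz⟩) := fun z hz => (hkey1 z hz).2.2
  have hTdense : Dense (T.domain : Set H) := Dense.mono hABBA.1 hABdense
  have hAclosed : IsClosed (A.graph : Set (H × H)) := by
    rw [← hAeq]; exact adjoint_graph_closed A hAdense
  -- mollifier
  have hmoll : ∀ ε : ℝ, 0 < ε → ∃ D : H → H,
      (∀ z, C (C (D z)) + (ε : ℂ) • D z = z) ∧
      (∀ z w, D (z + w) = D z + D w) ∧
      (∀ z, D (C z) = C (D z)) ∧
      (∀ (z : H) (hz : z ∈ A.domain), ∃ h : D z ∈ A.domain,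
        A ⟨D z, h⟩ = D (A ⟨z, hz⟩)) := by
    intro ε hε
    set S : H →L[ℂ] H := C.comp C + (ε : ℂ) • ContinuousLinearMap.id ℂ H with hSdef
    have hSapply : ∀ z, S z = C (C z) + (ε : ℂ) • z := fun z => rfl
    have hco : ∀ z, ε * ‖z‖ ^ 2 ≤ (⟪S z, z⟫).re := by
      intro z
      rw [hSapply, inner_add_left, inner_smul_left, hCsa, Complex.add_re, Complex.mul_re]
      have h1 : (⟪C z, C z⟫).re = ‖C z‖ ^ 2 := inner_self_eq_norm_sq (𝕜 := ℂ) _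
      have h2 : (⟪z, z⟫).re = ‖z‖ ^ 2 := inner_self_eq_norm_sq (𝕜 := ℂ) _
      have h3 : (⟪z, z⟫).im = 0 := inner_self_im (𝕜 := ℂ) z
      rw [h1, h2, h3]
      simp only [Complex.ofReal_re, Complex.ofReal_im, Complex.conj_re, Complex.conj_im]
      nlinarith [sq_nonneg ‖C z‖]
    have hsurj := coercive_surj S hε hco
    have hinj := coercive_inj S hε hco
    set D : H → H := fun z => Function.surjInv hsurj z with hDdef
    have hSD : ∀ z, S (D z) = z := fun z => Function.surjInv_eq hsurj z
    have hd1 : ∀ z, C (C (D z)) + (ε : ℂ) • D z = z := fun z => by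
      rw [← hSapply]; exact hSD z
    have hd2 : ∀ z w, D (z + w) = D z + D w := by
      intro z w; apply hinj; rw [hSD, _root_.map_add, hSD, hSD]
    have hd3 : ∀ z, D (C z) = C (D z) := by
      intro z; apply hinj
      rw [hSD]
      have h1 : S (C (D z)) = C (S (D z)) := by
        rw [hSapply, hSapply, _root_.map_add, _root_.map_smul]
      rw [h1, hSD]
    refine ⟨D, hd1, hd2, hd3, ?_⟩
    -- commutation with A
    have hSgraph : ∀ p ∈ A.graph, (S p.1, S p.2) ∈ A.graph := by
      intro p hp
      rw [LinearPMap.mem_graph_iff] at hp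
      obtain ⟨u, hu1, hu2⟩ := hp
      have hp1 : p.1 ∈ A.domain := hu1 ▸ u.2
      obtain ⟨hc1, hc1v⟩ := hCA p.1 hp1
      obtain ⟨hc2, hc2v⟩ := hCA (C p.1) hc1
      have hmem : S p.1 ∈ A.domain := by
        rw [hSapply]
        exact add_mem hc2 (Submodule.smul_mem _ _ hp1)
      rw [LinearPMap.mem_graph_iff]
      refine ⟨⟨S p.1, hmem⟩, rfl, ?_⟩
      have hsplit : (⟨S p.1, hmem⟩ : A.domain)
          = ⟨C (C p.1), hc2⟩ + (ε : ℂ) • ⟨p.1, hp1⟩ := Subtype.ext (hSapply p.1)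
      rw [hsplit, A.map_add, A.map_smul, hc2v, hc1v]
      have hup : A ⟨p.1, hp1⟩ = p.2 := by
        rw [← hu2]; exact congrArg _ (Subtype.ext hu1.symm)
      rw [hup, ← hSapply]
    intro z hz
    have hp := A.mem_graph ⟨z, hz⟩
    obtain ⟨q, hq, hq1, hq2⟩ := graph_surj A hAclosed S hSgraph hε hco _ hp
    rw [LinearPMap.mem_graph_iff] at hq
    obtain ⟨w, hw1, hw2⟩ := hq
    have hDz : D z = q.1 := by
      apply hinj; rw [hSD, hq1]
    have hq1mem : q.1 ∈ A.domain := by rw [← hw1]; exact w.2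
    have hmem : D z ∈ A.domain := by rw [hDz]; exact hq1mem
    refine ⟨hmem, ?_⟩
    have h6 : A ⟨D z, hmem⟩ = q.2 := by
      rw [← hw2]; exact congrArg _ (Subtype.ext (show D z = (w : H) by rw [hDz]; exact hw1.symm))
    rw [h6]
    apply hinj
    rw [hSD, hq2]
  -- Part 1 : T† ≤ T
  have hpart1 : ∀ y : T†.domain, ∃ hm : (y : H) ∈ T.domain,
      T ⟨(y : H), hm⟩ = T† y := by
    intro y
    have hz : ∀ x : T.domain, ⟪T† y, (x : H)⟫ = ⟪(y : H), T x⟫ :=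
      fun x => T.adjoint_isFormalAdjoint hTdense y x
    have hyA : ∀ w : A.domain, ⟪C (T† y), (w : H)⟫ = ⟪(y : H), A w⟫ := by
      intro w
      obtain ⟨hm, hval, -⟩ := hkey1 (w : H) w.2
      calc ⟪C (T† y), (w : H)⟫ = ⟪T† y, C (w : H)⟫ := hCsa _ _
        _ = ⟪(y : H), T ⟨C (w : H), hm⟩⟫ := hz ⟨C (w : H), hm⟩
        _ = ⟪(y : H), A w⟫ := by rw [hval]
    have hyAd : (y : H) ∈ A†.domain :=
      A.mem_adjoint_domain_of_exists _ ⟨C (T† y), fun w => hyA w⟩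
    have hyval : A† ⟨(y : H), hyAd⟩ = C (T† y) :=
      LinearPMap.adjoint_apply_eq hAdense _ fun w => hyA w
    have hle : A† ≤ A := le_of_eq hAeq
    have hyA' : (y : H) ∈ A.domain := hle.1 hyAd
    have hyval' : A ⟨(y : H), hyA'⟩ = C (T† y) := by
      rw [← hyval]
      exact (hle.2 (x := ⟨(y : H), hyAd⟩) (y := ⟨(y : H), hyA'⟩) rfl).symm
    have hm2 : A ⟨(y : H), hyA'⟩ ∈ B.domain := by rw [hyval']; exact hCmem _
    refine ⟨⟨hyA', hm2⟩, ?_⟩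
    refine (hBAapply _ _ hyA' hm2).trans ?_
    calc B ⟨A ⟨(y : H), hyA'⟩, hm2⟩ = B ⟨C (T† y), hCmem _⟩ :=
          congrArg _ (Subtype.ext hyval')
      _ = T† y := hBC _
  -- Part 2 : symmetry of T
  have hsym : ∀ y x : T.domain, ⟪T y, (x : H)⟫ = ⟪(y : H), T x⟫ := by
    intro y x
    obtain ⟨hx1, hx2⟩ := x.2
    obtain ⟨hy1, hy2⟩ := y.2
    obtain ⟨u, hu⟩ : ∃ u' : H, u' = T x := ⟨_, rfl⟩
    obtain ⟨v, hv⟩ : ∃ v' : H, v' = T y := ⟨_, rfl⟩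
    rw [← hu, ← hv]
    have hTx : u = B ⟨A ⟨(x : H), hx1⟩, hx2⟩ := hu.trans (hBAapply _ x.2 hx1 hx2)
    have hTy : v = B ⟨A ⟨(y : H), hy1⟩, hy2⟩ := hv.trans (hBAapply _ y.2 hy1 hy2)
    have hAx : C u = A ⟨(x : H), hx1⟩ := by rw [hTx]; exact hC1 _
    have hAy : C v = A ⟨(y : H), hy1⟩ := by rw [hTy]; exact hC1 _
    suffices h : ∀ δ : ℝ, 0 < δ → ‖⟪v, (x : H)⟫ - ⟪(y : H), u⟫‖ ≤ δ by
      have h0 : ⟪v, (x : H)⟫ - ⟪(y : H), u⟫ = 0 := by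
        by_contra hne
        have hpos : 0 < ‖⟪v, (x : H)⟫ - ⟪(y : H), u⟫‖ := norm_pos_iff.mpr hne
        have := h (‖⟪v, (x : H)⟫ - ⟪(y : H), u⟫‖ / 2) (by linarith)
        linarith
      exact sub_eq_zero.mp h0
    intro δ hδ0
    have hApprox : ∀ t : H, ∀ r : ℝ, 0 < r → ∃ w : H, ‖t - C w‖ < r := by
      intro t r hr
      have hcl := hBdense t
      rw [Metric.mem_closure_iff] at hcl
      obtain ⟨b, hb, hbd⟩ := hcl r hr
      refine ⟨B ⟨b, hb⟩, ?_⟩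
      rw [hC1 ⟨b, hb⟩, ← dist_eq_norm]
      exact hbd
    set r1 : ℝ := δ / 4 / (‖v‖ + 1) with hr1def
    set r2 : ℝ := δ / 4 / (‖(y : H)‖ + 1) with hr2def
    have hr1 : 0 < r1 := by positivity
    have hr2 : 0 < r2 := by positivity
    obtain ⟨w1, hw1⟩ := hApprox (x : H) r1 hr1
    obtain ⟨w2, hw2⟩ := hApprox u r2 hr2
    set ε : ℝ := min 1 (min ((r1 / (‖w1‖ + 1)) ^ 2 * 2) ((r2 / (‖w2‖ + 1)) ^ 2 * 2)) with hεdef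
    have hε : 0 < ε := by positivity
    obtain ⟨D, hd1, hd2, hd3, hd4⟩ := hmoll ε hε
    -- bounds
    have hb1' : ∀ z y : H, C (C y) + (ε : ℂ) • y = z → ε * ‖y‖ ≤ ‖z‖ := by
      intro z y hz
      rcases eq_or_ne y 0 with rfl | h0
      · rw [norm_zero, mul_zero]; exact norm_nonneg z
      have hre : ε * ‖y‖ ^ 2 ≤ (⟪z, y⟫).re := by
        rw [← hz, inner_add_left, inner_smul_left]
        have h5 : ⟪C (C y), y⟫ = ⟪C y, C y⟫ := hCsa _ _
        have h1 : (⟪C y, C y⟫).re = ‖C y‖ ^ 2 := inner_self_eq_norm_sq (𝕜 := ℂ) _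
        have h2 : (⟪y, y⟫).re = ‖y‖ ^ 2 := inner_self_eq_norm_sq (𝕜 := ℂ) _
        have h3 : (⟪y, y⟫).im = 0 := inner_self_im (𝕜 := ℂ) _
        rw [h5, Complex.add_re, Complex.mul_re, h1, h2, h3]
        simp only [Complex.ofReal_re, Complex.ofReal_im, Complex.conj_re, Complex.conj_im]
        nlinarith [sq_nonneg ‖C y‖]
      have habs : (⟪z, y⟫).re ≤ ‖z‖ * ‖y‖ := by
        refine (Complex.re_le_norm _).trans ?_
        exact norm_inner_le_norm _ _
      have hy0 : 0 < ‖y‖ := norm_pos_iff.mpr h0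
      have h6 := hre.trans habs
      rw [pow_two, ← mul_assoc] at h6
      exact le_of_mul_le_mul_right h6 hy0
    have hb2' : ∀ w y : H, C (C y) + (ε : ℂ) • y = w →
        ε * ‖C y‖ ≤ Real.sqrt (ε / 2) * ‖w‖ := by
      intro w y hw
      have hna := norm_add_sq (𝕜 := ℂ) (C (C y)) ((ε : ℂ) • y)
      rw [hw] at hna
      have hmid : RCLike.re ⟪C (C y), (ε : ℂ) • y⟫ = ε * ‖C y‖ ^ 2 := by
        have h5 : ⟪C (C y), (ε : ℂ) • y⟫ = (ε : ℂ) * ⟪C y, C y⟫ := by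
          rw [inner_smul_right, hCsa (C y) y]
        have h1 : (⟪C y, C y⟫).re = ‖C y‖ ^ 2 := inner_self_eq_norm_sq (𝕜 := ℂ) _
        have h3 : (⟪C y, C y⟫).im = 0 := inner_self_im (𝕜 := ℂ) _
        have : RCLike.re ⟪C (C y), (ε : ℂ) • y⟫ = (⟪C (C y), (ε : ℂ) • y⟫).re := rfl
        rw [this, h5, Complex.mul_re, h1, h3]
        simp only [Complex.ofReal_re, Complex.ofReal_im]
        ring
      rw [hmid] at hna
      have h7 : 2 * (ε * ‖C y‖ ^ 2) ≤ ‖w‖ ^ 2 := by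
        nlinarith [sq_nonneg ‖C (C y)‖, sq_nonneg ‖(ε : ℂ) • y‖]
      have hsq : (ε * ‖C y‖) ^ 2 ≤ ε / 2 * ‖w‖ ^ 2 := by nlinarith [hε.le, norm_nonneg (C y)]
      have h6 := Real.sqrt_le_sqrt hsq
      rw [Real.sqrt_sq (by positivity)] at h6
      refine h6.trans ?_
      rw [Real.sqrt_mul (by positivity), Real.sqrt_sq (norm_nonneg w)]
    have hb1 : ∀ z, ε * ‖D z‖ ≤ ‖z‖ := fun z => hb1' z (D z) (hd1 z)
    have hb2 : ∀ w, ε * ‖C (D w)‖ ≤ Real.sqrt (ε / 2) * ‖w‖ :=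
      fun w => hb2' w (D w) (hd1 w)
    have hDbound : ∀ t w : H, ε * ‖D t‖ ≤ ‖t - C w‖ + Real.sqrt (ε / 2) * ‖w‖ := by
      intro t w
      have hsplit : D t = D (t - C w) + D (C w) := by rw [← hd2, sub_add_cancel]
      calc ε * ‖D t‖ = ε * ‖D (t - C w) + D (C w)‖ := by rw [hsplit]
        _ ≤ ε * (‖D (t - C w)‖ + ‖D (C w)‖) :=
            mul_le_mul_of_nonneg_left (norm_add_le _ _) hε.le
        _ = ε * ‖D (t - C w)‖ + ε * ‖D (C w)‖ := by ring
        _ ≤ ‖t - C w‖ + Real.sqrt (ε / 2) * ‖w‖ := by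
            refine add_le_add (hb1 _) ?_
            rw [hd3]
            exact hb2 w
    -- the chain identity
    obtain ⟨hDx, hDxval⟩ := hd4 (x : H) hx1
    obtain ⟨hCDx, hCDxval⟩ := hCA (D (x : H)) hDx
    have hchain : ⟪v, C (C (D (x : H)))⟫ = ⟪(y : H), C (C (D u))⟫ := by
      calc ⟪v, C (C (D (x : H)))⟫
          = ⟪B ⟨A ⟨(y : H), hy1⟩, hy2⟩, C (C (D (x : H)))⟫ := by rw [← hTy]
        _ = ⟪(A ⟨(y : H), hy1⟩ : H), B ⟨C (C (D (x : H))), hCmem _⟩⟫ :=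
            hBsym ⟨A ⟨(y : H), hy1⟩, hy2⟩ ⟨C (C (D (x : H))), hCmem _⟩
        _ = ⟪(A ⟨(y : H), hy1⟩ : H), C (D (x : H))⟫ := by rw [hBC]
        _ = ⟪(y : H), A ⟨C (D (x : H)), hCDx⟩⟫ :=
            hAsym ⟨(y : H), hy1⟩ ⟨C (D (x : H)), hCDx⟩
        _ = ⟪(y : H), C (A ⟨D (x : H), hDx⟩)⟫ := by rw [hCDxval]
        _ = ⟪(y : H), C (D (A ⟨(x : H), hx1⟩))⟫ := by rw [hDxval]
        _ = ⟪(y : H), C (D (C u))⟫ := by rw [hAx]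
        _ = ⟪(y : H), C (C (D u))⟫ := by rw [hd3]
    -- final estimate
    have hrwgen : ∀ z : H, z - C (C (D z)) = (ε : ℂ) • D z := by
      intro z
      have h8 := (hd1 z).symm
      exact sub_eq_of_eq_add' h8
    have hrwx : (x : H) - C (C (D (x : H))) = (ε : ℂ) • D (x : H) := hrwgen _
    have hrwu : u - C (C (D u)) = (ε : ℂ) • D u := hrwgen _
    have e1 : ⟪v, (x : H)⟫ - ⟪v, C (C (D (x : H)))⟫ = ⟪v, (ε : ℂ) • D (x : H)⟫ := by
      rw [← inner_sub_right, hrwx]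
    have e2 : ⟪(y : H), u⟫ - ⟪(y : H), C (C (D u))⟫ = ⟪(y : H), (ε : ℂ) • D u⟫ := by
      rw [← inner_sub_right, hrwu]
    have hdiff : ⟪v, (x : H)⟫ - ⟪(y : H), u⟫
        = ⟪v, (ε : ℂ) • D (x : H)⟫ - ⟪(y : H), (ε : ℂ) • D u⟫ := by
      rw [← e1, ← e2, hchain]; ring
    rw [hdiff]
    have hn1 : ‖⟪v, (ε : ℂ) • D (x : H)⟫‖ ≤ ‖v‖ * (ε * ‖D (x : H)‖) := by
      refine (norm_inner_le_norm _ _).trans ?_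
      rw [norm_smul, Complex.norm_real, Real.norm_eq_abs, abs_of_pos hε]
    have hn2 : ‖⟪(y : H), (ε : ℂ) • D u⟫‖ ≤ ‖(y : H)‖ * (ε * ‖D u‖) := by
      refine (norm_inner_le_norm _ _).trans ?_
      rw [norm_smul, Complex.norm_real, Real.norm_eq_abs, abs_of_pos hε]
    -- smallness
    have hw1n : (0:ℝ) < ‖w1‖ + 1 := by positivity
    have hw2n : (0:ℝ) < ‖w2‖ + 1 := by positivity
    have hsqrtgen : ∀ (r n : ℝ), 0 < r → 0 < n + 1 → ε / 2 ≤ (r / (n + 1)) ^ 2 →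
        0 ≤ n → Real.sqrt (ε / 2) * n ≤ r := by
      intro r n hr hn hle hn0
      have h9 := Real.sqrt_le_sqrt hle
      rw [Real.sqrt_sq (le_of_lt (div_pos hr hn))] at h9
      calc Real.sqrt (ε / 2) * n ≤ r / (n + 1) * n :=
            mul_le_mul_of_nonneg_right h9 hn0
        _ = r * (n / (n + 1)) := by ring
        _ ≤ r * 1 := mul_le_mul_of_nonneg_left ((div_le_one hn).mpr (by linarith)) hr.le
        _ = r := mul_one _
    have hsqrt1 : Real.sqrt (ε / 2) * ‖w1‖ ≤ r1 := by
      refine hsqrtgen r1 ‖w1‖ hr1 hw1n ?_ (norm_nonneg _)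
      have h10 : ε ≤ (r1 / (‖w1‖ + 1)) ^ 2 * 2 := (min_le_right _ _).trans (min_le_left _ _)
      linarith
    have hsqrt2 : Real.sqrt (ε / 2) * ‖w2‖ ≤ r2 := by
      refine hsqrtgen r2 ‖w2‖ hr2 hw2n ?_ (norm_nonneg _)
      have h10 : ε ≤ (r2 / (‖w2‖ + 1)) ^ 2 * 2 := (min_le_right _ _).trans (min_le_right _ _)
      linarith
    have hεx : ε * ‖D (x : H)‖ ≤ 2 * r1 :=
      (hDbound (x : H) w1).trans (by linarith [hw1])
    have hεu : ε * ‖D u‖ ≤ 2 * r2 :=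
      (hDbound u w2).trans (by linarith [hw2])
    have harith : ∀ n : ℝ, 0 ≤ n → n * (2 * (δ / 4 / (n + 1))) ≤ δ / 2 := by
      intro n hn
      have h1 : (0:ℝ) < n + 1 := by linarith
      have h2 : n * (2 * (δ / 4 / (n + 1))) = n / (n + 1) * (δ / 2) := by
        field_simp
        ring
      rw [h2]
      calc n / (n + 1) * (δ / 2) ≤ 1 * (δ / 2) :=
            mul_le_mul_of_nonneg_right ((div_le_one h1).mpr (by linarith)) (by positivity)
        _ = δ / 2 := one_mul _
    have hvr1 : ‖v‖ * (2 * r1) ≤ δ / 2 := by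
      rw [hr1def]
      exact harith ‖v‖ (norm_nonneg _)
    have hyr2 : ‖(y : H)‖ * (2 * r2) ≤ δ / 2 := by
      rw [hr2def]
      exact harith ‖(y : H)‖ (norm_nonneg _)
    calc ‖⟪v, (ε : ℂ) • D (x : H)⟫ - ⟪(y : H), (ε : ℂ) • D u⟫‖
        ≤ ‖⟪v, (ε : ℂ) • D (x : H)⟫‖ + ‖⟪(y : H), (ε : ℂ) • D u⟫‖ := norm_sub_le _ _
      _ ≤ ‖v‖ * (ε * ‖D (x : H)‖) + ‖(y : H)‖ * (ε * ‖D u‖) := add_le_add hn1 hn2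
      _ ≤ ‖v‖ * (2 * r1) + ‖(y : H)‖ * (2 * r2) := by
          refine add_le_add ?_ ?_
          · exact mul_le_mul_of_nonneg_left hεx (norm_nonneg _)
          · exact mul_le_mul_of_nonneg_left hεu (norm_nonneg _)
      _ ≤ δ / 2 + δ / 2 := add_le_add hvr1 hyr2
      _ = δ := by ring
  -- assembly
  rw [LinearPMap.isSelfAdjoint_def]
  apply le_antisymm
  · refine ⟨fun a ha => (hpart1 ⟨a, ha⟩).choose, fun p q hpq => ?_⟩
    obtain ⟨hm, hval⟩ := hpart1 p
    rw [← hval]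
    exact congrArg _ (Subtype.ext hpq)
  · refine ⟨fun a ha => T.mem_adjoint_domain_of_exists a
      ⟨T ⟨a, ha⟩, fun w => hsym ⟨a, ha⟩ w⟩, fun p q hpq => ?_⟩
    refine (LinearPMap.adjoint_apply_eq hTdense q (x₀ := T p) fun w => ?_).symm
    rw [hsym p w, hpq]
end

section
/- Let S be a bounded self-adjoint operator on a complex Hilbert space H and let T be an unbounded self-adjoint operator on H such that ST ⊂ TS, i.e. for every x ∈ D(T), Sx ∈ D(T) and S(Tx) = T(Sx). Then for every real-valued continuous function f defined on the spectrum σ(S), one has f(S)T ⊂ T f(S), i.e. for every x ∈ D(T), f(S)x ∈ D(T) and f(S)(Tx) = T(f(S)x), where f(S) is given by the continuous functional calculus of S. -/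
open LinearPMap
open scoped InnerProductSpace

variable {H : Type*} [NormedAddCommGroup H] [InnerProductSpace ℂ H] [CompleteSpace H]

/-- If `S` is a bounded self-adjoint operator and `T` an unbounded self-adjoint operator
with `ST ⊂ TS`, then `f(S)T ⊂ Tf(S)` for every real-valued continuous function `f` on the
spectrum of `S`, where `f(S)` is given by the continuous functional calculus. -/
theorem cfc_commutes (S : H →L[ℂ] H) (hS : IsSelfAdjoint S)
    (T : H →ₗ.[ℂ] H) (hT : IsSelfAdjoint T)
    (hST : ∀ x : T.domain, ∃ hx : S (x : H) ∈ T.domain, S (T x) = T ⟨S (x : H), hx⟩)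
    (f : ℝ → ℝ) (hf : ContinuousOn f (spectrum ℝ S)) :
    ∀ x : T.domain, ∃ hx : cfc f S (x : H) ∈ T.domain,
      cfc f S (T x) = T ⟨cfc f S (x : H), hx⟩ := by
  have hd : Dense (T.domain : Set H) := hT.dense_domain
  have hTT : T† = T := hT
  -- symmetry of T
  have sym : ∀ u v : T.domain, ⟪T u, (v : H)⟫_ℂ = ⟪(u : H), T v⟫_ℂ := by
    have h := LinearPMap.adjoint_isFormalAdjoint hd
    rw [hTT] at h
    exact h
  -- key closedness criterion
  have key : ∀ y z : H, (∀ v : T.domain, ⟪z, (v : H)⟫_ℂ = ⟪y, T v⟫_ℂ) →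
      ∃ hy : y ∈ T.domain, T ⟨y, hy⟩ = z := by
    intro y z h
    have hy : y ∈ T†.domain := LinearPMap.mem_adjoint_domain_of_exists y ⟨z, h⟩
    have hy' : y ∈ T.domain := hTT ▸ hy
    refine ⟨hy', ?_⟩
    have h1 := LinearPMap.adjoint_apply_eq hd (⟨y, hy⟩ : T†.domain) h
    obtain ⟨hdom, heq⟩ := LinearPMap.ext_iff.mp hTT
    exact (heq (x := y) (hf := hy) (hg := hy')).symm.trans h1
  set P : (H →L[ℂ] H) → Prop :=
    fun A => ∀ x : T.domain, ∃ hx : A (x : H) ∈ T.domain, A (T x) = T ⟨A (x : H), hx⟩ with hP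
  -- reformulation of P via inner products
  have hPC : ∀ A : H →L[ℂ] H,
      P A ↔ ∀ x v : T.domain, ⟪A (T x), (v : H)⟫_ℂ = ⟪A (x : H), T v⟫_ℂ := by
    intro A
    constructor
    · intro hA x v
      obtain ⟨hx, hx'⟩ := hA x
      rw [hx', sym ⟨A x, hx⟩ v]
    · intro hA x
      exact (key (A x) (A (T x)) (fun v => hA x v)).imp (fun _ h => h.symm)
  -- the set of P-operators is closed
  have hclosed : IsClosed {A : H →L[ℂ] H | P A} := by
    have : {A : H →L[ℂ] H | P A} =
        ⋂ (x : T.domain) (v : T.domain),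
          {A : H →L[ℂ] H | ⟪A (T x), (v : H)⟫_ℂ = ⟪A (x : H), T v⟫_ℂ} := by
      ext A
      simp only [Set.mem_setOf_eq, Set.mem_iInter, hPC A]
    rw [this]
    refine isClosed_iInter fun x => isClosed_iInter fun v => isClosed_eq ?_ ?_
    · exact Continuous.inner
        ((ContinuousLinearMap.apply ℂ H (T x)).continuous) continuous_const
    · exact Continuous.inner
        ((ContinuousLinearMap.apply ℂ H (x : H)).continuous) continuous_const
  -- P is an algebra property
  have hPone : P 1 := fun x => ⟨x.2, rfl⟩
  have hPmul : ∀ A B, P A → P B → P (A * B) := by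
    intro A B hA hB x
    obtain ⟨hBx, hBx'⟩ := hB x
    obtain ⟨hABx, hABx'⟩ := hA ⟨B x, hBx⟩
    refine ⟨hABx, ?_⟩
    simp only [ContinuousLinearMap.mul_apply]
    rw [hBx', hABx']
  have hPadd : ∀ A B, P A → P B → P (A + B) := by
    intro A B hA hB x
    obtain ⟨hAx, hAx'⟩ := hA x
    obtain ⟨hBx, hBx'⟩ := hB x
    refine ⟨T.domain.add_mem hAx hBx, ?_⟩
    simp only [ContinuousLinearMap.add_apply]
    rw [hAx', hBx', ← T.map_add]
    rfl
  have hPsmulC : ∀ (c : ℂ) (A), P A → P (c • A) := by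
    intro c A hA x
    obtain ⟨hAx, hAx'⟩ := hA x
    refine ⟨T.domain.smul_mem c hAx, ?_⟩
    simp only [ContinuousLinearMap.smul_apply]
    rw [hAx', ← T.map_smul]
    rfl
  have hPzero : P 0 := by
    intro x
    refine ⟨T.domain.zero_mem, ?_⟩
    have : T (0 : T.domain) = 0 := T.map_zero
    exact this.symm
  have hPS : P S := hST
  -- set up the continuous functional calculus
  have hspec : ContinuousOn f (spectrum ℝ S) := hf
  let φ : C(spectrum ℝ S, ℝ) →⋆ₐ[ℝ] (H →L[ℂ] H) := cfcHom hS (R := ℝ)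
  -- the subalgebra of functions g with P (φ g)
  let Q : Subalgebra ℝ C(spectrum ℝ S, ℝ) :=
    { carrier := {g | P (φ g)}
      one_mem' := by simpa using hPone
      mul_mem' := fun {g h} hg hh => by
        simpa only [Set.mem_setOf_eq, _root_.map_mul] using hPmul _ _ hg hh
      add_mem' := fun {g h} hg hh => by
        simpa only [Set.mem_setOf_eq, _root_.map_add] using hPadd _ _ hg hh
      zero_mem' := by
        simpa only [Set.mem_setOf_eq, _root_.map_zero] using hPzero
      algebraMap_mem' := fun r => by
        show P (φ _)
        rw [AlgHomClass.commutes, Algebra.algebraMap_eq_smul_one]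
        have h1 : (algebraMap ℝ ℂ) r • (1 : H →L[ℂ] H) = r • 1 :=
          algebraMap_smul ℂ r (1 : H →L[ℂ] H)
        rw [← h1]
        exact hPsmulC _ _ hPone }
  have hQclosed : IsClosed (Q : Set C(spectrum ℝ S, ℝ)) := by
    have : (Q : Set C(spectrum ℝ S, ℝ)) = φ ⁻¹' {A | P A} := rfl
    rw [this]
    exact hclosed.preimage (cfcHom_isClosedEmbedding hS).continuous
  -- Q contains the identity function, hence separates points
  have hid : ((ContinuousMap.id ℝ).restrict (spectrum ℝ S)) ∈ Q := by
    show P (φ _)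
    rw [show φ ((ContinuousMap.id ℝ).restrict (spectrum ℝ S)) = S from cfcHom_id hS]
    exact hPS
  have hsep : Q.SeparatesPoints := by
    intro x y hxy
    refine ⟨_, ⟨(ContinuousMap.id ℝ).restrict (spectrum ℝ S), hid, rfl⟩, ?_⟩
    simpa [ContinuousMap.restrict] using Subtype.coe_injective.ne hxy
  have htop : Q.topologicalClosure = ⊤ :=
    ContinuousMap.subalgebra_topologicalClosure_eq_top_of_separatesPoints Q hsep
  have hQtop : ∀ g : C(spectrum ℝ S, ℝ), g ∈ Q := by
    intro g
    have hg : g ∈ Q.topologicalClosure := by rw [htop]; exact Algebra.mem_top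
    have h2 : g ∈ (Q.topologicalClosure : Set C(spectrum ℝ S, ℝ)) := hg
    rw [Subalgebra.topologicalClosure_coe, hQclosed.closure_eq] at h2
    exact h2
  -- conclude
  have hcfc : cfc f S = φ ⟨_, hspec.restrict⟩ := cfc_apply f S hS hspec
  have := hQtop ⟨_, hspec.restrict⟩
  rw [hcfc]
  exact this
end

section
/- Let S be a bounded, positive, self-adjoint operator on a complex Hilbert space H and let T be an unbounded self-adjoint operator on H such that ST ⊂ TS, i.e. for every x ∈ D(T), Sx ∈ D(T) and S(Tx) = T(Sx). Then S^{1/2} T ⊂ T S^{1/2}, i.e. for every x ∈ D(T), S^{1/2}x ∈ D(T) and S^{1/2}(Tx) = T(S^{1/2}x), where S^{1/2} is the positive square root of S. -/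
open LinearPMap

variable {H : Type*} [NormedAddCommGroup H] [InnerProductSpace ℂ H] [CompleteSpace H]

set_option maxHeartbeats 2000000 in
/-- If `S` is a bounded positive self-adjoint operator and `T` an unbounded self-adjoint
operator with `ST ⊂ TS`, then `S^{1/2}T ⊂ TS^{1/2}`, where `S^{1/2}` is the positive
square root of `S`. -/
theorem sqrt_commutes (S : H →L[ℂ] H) (hS : S.IsPositive)
    (T : H →ₗ.[ℂ] H) (hT : IsSelfAdjoint T)
    (hST : ∀ x : T.domain, ∃ hx : S (x : H) ∈ T.domain, S (T x) = T ⟨S (x : H), hx⟩) :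
    ∀ x : T.domain, ∃ hx : CFC.sqrt S (x : H) ∈ T.domain,
      CFC.sqrt S (T x) = T ⟨CFC.sqrt S (x : H), hx⟩ := by
  have hdense : Dense (T.domain : Set H) := hT.dense_domain
  have hadj : T† = T := hT
  -- `T` is symmetric
  have hsym : T.IsFormalAdjoint T := by
    have h := LinearPMap.adjoint_isFormalAdjoint hdense
    rwa [hadj] at h
  -- the graph of `T` is closed
  have hgraph_closed : IsClosed (T.graph : Set (H × H)) := by
    have heq : (T.graph : Set (H × H)) =
        ⋂ (w : T.domain), {p : H × H | (inner ℂ p.2 (w : H) : ℂ) = inner ℂ p.1 (T w)} := by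
      ext p
      constructor
      · intro hp
        rcases T.mem_graph_iff.mp hp with ⟨y, hy1, hy2⟩
        simp only [Set.mem_iInter, Set.mem_setOf_eq, ← hy1, ← hy2]
        exact fun w => hsym y w
      · intro hp
        simp only [Set.mem_iInter, Set.mem_setOf_eq] at hp
        have hmem : p.1 ∈ T†.domain :=
          mem_adjoint_domain_of_exists _ ⟨p.2, fun x => hp x⟩
        have happ : T† ⟨p.1, hmem⟩ = p.2 :=
          adjoint_apply_eq hdense _ (fun x => hp x)
        have hg : (p.1, p.2) ∈ T†.graph := by
          have := T†.mem_graph ⟨p.1, hmem⟩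
          rwa [happ] at this
        rw [hadj] at hg
        simpa using hg
    rw [heq]
    exact isClosed_iInter fun w => isClosed_eq
      (continuous_snd.inner continuous_const) (continuous_fst.inner continuous_const)
  -- the set of bounded operators commuting with `T`
  set M : Set (H →L[ℂ] H) := {A | ∀ x : T.domain, (A x, A (T x)) ∈ T.graph} with hM
  have hmemM : ∀ A ∈ M, ∀ x : T.domain,
      ∃ hx : A (x : H) ∈ T.domain, A (T x) = T ⟨A (x : H), hx⟩ := by
    intro A hA x
    rcases T.mem_graph_iff.mp (hA x) with ⟨y, hy1, hy2⟩
    dsimp only at hy1 hy2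
    refine ⟨hy1 ▸ y.2, ?_⟩
    rw [← hy2]
    congr 1
    exact Subtype.ext hy1
  -- `M` is closed
  have hM_closed : IsClosed M := by
    have : M = ⋂ (x : T.domain),
        ((fun A : H →L[ℂ] H => (A (x : H), A (T x))) ⁻¹' (T.graph : Set (H × H))) := by
      ext A
      simp only [hM, Set.mem_iInter, Set.mem_preimage, Set.mem_setOf_eq, SetLike.mem_coe]
    rw [this]
    refine isClosed_iInter fun x => hgraph_closed.preimage ?_
    exact ((ContinuousLinearMap.apply ℂ H ((x : H))).continuous).prodMk
      ((ContinuousLinearMap.apply ℂ H (T x)).continuous)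
  -- `M` contains `S`
  have hSM : S ∈ M := by
    intro x
    obtain ⟨hx, heq⟩ := hST x
    rw [heq]
    exact T.mem_graph ⟨S (x : H), hx⟩
  -- `M` is closed under multiplication
  have hmul : ∀ A ∈ M, ∀ B ∈ M, A * B ∈ M := by
    intro A hA B hB x
    rcases T.mem_graph_iff.mp (hB x) with ⟨y, hy1, hy2⟩
    dsimp only at hy1 hy2
    have h2 := hA y
    rw [hy1, hy2] at h2
    simpa using h2
  -- `M` contains all real polynomials in `S`
  have hpoly : ∀ q : Polynomial ℝ, Polynomial.aeval S q ∈ M := by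
    intro q
    induction q using Polynomial.induction_on with
    | C a =>
        intro x
        have : ((Polynomial.aeval S) (Polynomial.C a)) = a • (1 : H →L[ℂ] H) := by
          rw [Polynomial.aeval_C, Algebra.algebraMap_eq_smul_one]
        rw [this]
        simp only [ContinuousLinearMap.smul_apply, ContinuousLinearMap.one_apply]
        have := T.mem_graph x
        simpa using T.graph.smul_of_tower_mem a this
    | add p q hp hq =>
        intro x
        have := T.graph.add_mem (hp x) (hq x)
        simpa [Prod.mk_add_mk] using this
    | monomial n a hn =>
        have : (Polynomial.aeval S) (Polynomial.C a * Polynomial.X ^ (n + 1)) =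
            ((Polynomial.aeval S) (Polynomial.C a * Polynomial.X ^ n)) * S := by
          rw [pow_succ, ← mul_assoc, map_mul, Polynomial.aeval_X]
        rw [this]
        exact hmul _ hn _ hSM
  have hSsa : IsSelfAdjoint S := hS.isSelfAdjoint
  -- `M` contains `cfc Real.sqrt S`
  have hsqrt_mem : cfc Real.sqrt S ∈ M := by
    rw [← hM_closed.closure_eq]
    rw [Metric.mem_closure_iff]
    intro ε hε
    set s : Set ℝ := spectrum ℝ S with hs
    set f₀ : C(s, ℝ) := ⟨fun x => Real.sqrt x, by fun_prop⟩ with hf₀def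
    have hf₀ : f₀ ∈ closure ((polynomialFunctions s : Set C(s, ℝ))) := by
      have h1 : f₀ ∈ (polynomialFunctions s).topologicalClosure := by
        rw [polynomialFunctions.topologicalClosure s]
        trivial
      exact h1
    obtain ⟨g, hgM, hgd⟩ := Metric.mem_closure_iff.mp hf₀ ε hε
    obtain ⟨q, -, hq⟩ := hgM
    refine ⟨Polynomial.aeval S q, hpoly q, ?_⟩
    rw [dist_eq_norm, ← cfc_polynomial q S, ← cfc_sub Real.sqrt (fun x => q.eval x) S]
    refine lt_of_le_of_lt (norm_cfc_le dist_nonneg ?_) hgd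
    intro x hx
    have hd := ContinuousMap.dist_apply_le_dist (f := f₀) (g := g) ⟨x, hx⟩
    have hgx : g ⟨x, hx⟩ = q.eval x := by
      rw [← hq]
      simp
    rw [hgx] at hd
    simpa [Real.dist_eq, Real.norm_eq_abs, hf₀def] using hd
  -- `CFC.sqrt S = cfc Real.sqrt S`
  have hS0 : (0 : H →L[ℂ] H) ≤ S := (ContinuousLinearMap.nonneg_iff_isPositive S).mpr hS
  have key : CFC.sqrt S = cfc Real.sqrt S := by
    refine CFC.sqrt_unique ?_ ?_
    · rw [← cfc_mul Real.sqrt Real.sqrt S]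
      have h1 : cfc (fun x => Real.sqrt x * Real.sqrt x) S = cfc (id : ℝ → ℝ) S :=
        cfc_congr fun x hx => Real.mul_self_sqrt (spectrum_nonneg_of_nonneg hS0 hx)
      rw [h1, cfc_id ℝ S]
    · exact cfc_nonneg fun x _ => Real.sqrt_nonneg x
  rw [key]
  exact hmemM _ hsqrt_mem
end
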